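/- arXiv:2407.16720 — 2 statements merged into one kernel-verified Lean document; each statement's English description precedes it below -/
import Mathlib

section
/- Let (c, ρ, θ, u) be a classical solution of the mesoscopic two-phase Navier–Stokes system on [0,T], spatially 1-periodic, with u twice continuously differentiable in x and σ := μ(c)∂ₓu − (γ(c)−1)ρθ continuously differentiable. Then σ satisfies pointwise the equation D_tσ = μ(c)·∂ₓ(∂ₓσ/ρ) − ((γ(c)−1)/c_v(c) + 1)·σ·∂ₓu, where D_t f = ∂ₜf + u∂ₓf. -/
open Set Function MeasureTheory intervalIntegral

/-- Partial derivative in time of a function of `(t, x)`. -/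
noncomputable def pdt (f : ℝ → ℝ → ℝ) (t x : ℝ) : ℝ := deriv (fun s => f s x) t

/-- Partial derivative in space of a function of `(t, x)`. -/
noncomputable def pdx (f : ℝ → ℝ → ℝ) (t x : ℝ) : ℝ := deriv (fun y => f t y) x

/-- Affine interpolation of a coefficient between the two phases:
`aff a b c = c·a + (1−c)·b` (so `μ(c) = aff μ₊ μ₋ c`, etc.). -/
def affc (a b s : ℝ) : ℝ := s * a + (1 - s) * b

/-- Cauchy stress `σ = μ(c)∂ₓu − (γ(c)−1)ρθ` of the mesoscopic two-phase model. -/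
noncomputable def sigm (μp μm γp γm : ℝ) (c ρ θ u : ℝ → ℝ → ℝ) (t x : ℝ) : ℝ :=
  affc μp μm (c t x) * pdx u t x - (affc γp γm (c t x) - 1) * ρ t x * θ t x

/-- Specific total energy `E = u²/2 + c_v(c)θ`. -/
noncomputable def Etot (kp km : ℝ) (c θ u : ℝ → ℝ → ℝ) (t x : ℝ) : ℝ :=
  u t x ^ 2 / 2 + affc kp km (c t x) * θ t x

/-- Admissible constants: `μ_± > 0`, `γ_± > 1`, `c_{v,±} > 0`. -/
def GoodConsts (μp μm γp γm kp km : ℝ) : Prop :=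
  0 < μp ∧ 0 < μm ∧ 1 < γp ∧ 1 < γm ∧ 0 < kp ∧ 0 < km

/-- The mesoscopic two-phase Navier–Stokes system on the one-dimensional torus:
spatial 1-periodicity together with the transport, mass, momentum and total
energy equations, satisfied pointwise on `[0,T] × ℝ`. -/
def MesoEqns (μp μm γp γm kp km T : ℝ) (c ρ θ u : ℝ → ℝ → ℝ) : Prop :=
  (∀ t x : ℝ, c t (x + 1) = c t x) ∧ (∀ t x : ℝ, ρ t (x + 1) = ρ t x) ∧
  (∀ t x : ℝ, θ t (x + 1) = θ t x) ∧ (∀ t x : ℝ, u t (x + 1) = u t x) ∧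
  (∀ t ∈ Icc (0:ℝ) T, ∀ x : ℝ, pdt c t x + u t x * pdx c t x = 0) ∧
  (∀ t ∈ Icc (0:ℝ) T, ∀ x : ℝ,
    pdt ρ t x + pdx (fun s y => ρ s y * u s y) t x = 0) ∧
  (∀ t ∈ Icc (0:ℝ) T, ∀ x : ℝ,
    pdt (fun s y => ρ s y * u s y) t x + pdx (fun s y => ρ s y * u s y ^ 2) t x
      = pdx (sigm μp μm γp γm c ρ θ u) t x) ∧
  (∀ t ∈ Icc (0:ℝ) T, ∀ x : ℝ,
    pdt (fun s y => ρ s y * Etot kp km c θ u s y) t x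
      + pdx (fun s y => ρ s y * Etot kp km c θ u s y * u s y) t x
      = pdx (fun s y => sigm μp μm γp γm c ρ θ u s y * u s y) t x)

lemma hasDerivAt_pdt {f : ℝ → ℝ → ℝ} (hf : ContDiff ℝ 1 (uncurry f)) (t x : ℝ) :
    HasDerivAt (fun s => f s x) (pdt f t x) t := by
  have h := ((hf.differentiable one_ne_zero (t, x)).comp t
    (show DifferentiableAt ℝ (fun s : ℝ => (s, x)) t from differentiableAt_id.prodMk (differentiableAt_const x)))
  exact h.hasDerivAt

lemma hasDerivAt_pdx {f : ℝ → ℝ → ℝ} (hf : ContDiff ℝ 1 (uncurry f)) (t x : ℝ) :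
    HasDerivAt (fun y => f t y) (pdx f t x) x := by
  have h := ((hf.differentiable one_ne_zero (t, x)).comp x
    (show DifferentiableAt ℝ (fun y : ℝ => (t, y)) x from (differentiableAt_const t).prodMk differentiableAt_id))
  exact h.hasDerivAt

/-- Schwarz-type lemma via FTC: if `∂ₓu` is jointly `C¹` on an open set `O ∋ (t,x)`,
then `y ↦ ∂ₜu t y` is differentiable at `x` with derivative `∂ₜ∂ₓu (t,x)`. -/
lemma schwarz_ftc (u : ℝ → ℝ → ℝ) (O : Set (ℝ × ℝ)) (hO : IsOpen O) {t x : ℝ}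
    (hp : (t, x) ∈ O)
    (hut : ∀ y : ℝ, DifferentiableAt ℝ (fun s => u s y) t)
    (huv : ∀ s y : ℝ, HasDerivAt (fun z => u s z) (pdx u s y) y)
    (hvcont : ∀ s, Continuous (fun y => pdx u s y))
    (hvC : ContDiffOn ℝ 1 (uncurry (fun s y => pdx u s y)) O) :
    HasDerivAt (fun y => pdt u t y) (pdt (fun s y => pdx u s y) t x) x := by
  set v : ℝ → ℝ → ℝ := fun s y => pdx u s y with hv
  set W : ℝ × ℝ → ℝ := fun q => fderiv ℝ (uncurry v) q (1, 0) with hW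
  have hVd : ∀ q ∈ O, DifferentiableAt ℝ (uncurry v) q := fun q hq =>
    (hvC.differentiableOn one_ne_zero q hq).differentiableAt (hO.mem_nhds hq)
  have hWd : ∀ q ∈ O, HasDerivAt (fun s => v s q.2) (W q) q.1 := by
    intro q hq
    have h1 : HasDerivAt (fun s : ℝ => (s, q.2)) ((1:ℝ), (0:ℝ)) q.1 :=
      (hasDerivAt_id _).prodMk (hasDerivAt_const _ _)
    exact (hVd q hq).hasFDerivAt.comp_hasDerivAt q.1 h1
  have hWc : ContinuousOn W O := by
    have h := hvC.continuousOn_fderiv_of_isOpen hO le_rfl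
    exact h.clm_apply continuousOn_const
  obtain ⟨ε, hε, hball⟩ := Metric.isOpen_iff.mp hO (t, x) hp
  set r := ε / 2 with hr
  have hrpos : 0 < r := by positivity
  have hKO : Metric.closedBall (t, x) r ⊆ O :=
    (Metric.closedBall_subset_ball (by rw [hr]; linarith)).trans hball
  obtain ⟨C, hC⟩ := (isCompact_closedBall (t, x) r).exists_bound_of_continuousOn (hWc.mono hKO)
  have hsub : ∀ y ∈ Metric.ball x r, ∀ s ∈ Metric.ball t r, ∀ z ∈ uIoc x y,
      (s, z) ∈ Metric.closedBall (t, x) r := by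
    intro y hy s hs z hz
    have hz2 : z ∈ uIcc x y := uIoc_subset_uIcc hz
    have h1 : dist z x ≤ dist y x := by
      rw [Real.dist_eq, Real.dist_eq]
      exact abs_sub_left_of_mem_uIcc hz2
    have h2 : dist y x < r := Metric.mem_ball.mp hy
    have h3 : dist s t < r := Metric.mem_ball.mp hs
    rw [Metric.mem_closedBall, Prod.dist_eq]
    exact max_le h3.le (h1.trans h2.le)
  have key : ∀ y ∈ Metric.ball x r, pdt u t y - pdt u t x = ∫ z in x..y, W (t, z) := by
    intro y hy
    have hmem : ∀ z ∈ uIoc x y, (t, z) ∈ Metric.closedBall (t, x) r :=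
      fun z hz => hsub y hy t (Metric.mem_ball_self hrpos) z hz
    have hder : HasDerivAt (fun s => ∫ z in x..y, v s z) (∫ z in x..y, W (t, z)) t := by
      refine (intervalIntegral.hasDerivAt_integral_of_dominated_loc_of_deriv_le
        (F := fun s z => v s z) (F' := fun s z => W (s, z)) (bound := fun _ => |C| + 1)
        (Metric.ball_mem_nhds t hrpos) (Filter.Eventually.of_forall fun s => (hvcont s).aestronglyMeasurable)
        ((hvcont t).intervalIntegrable x y) ?_ ?_ intervalIntegrable_const ?_).2
      · refine (ContinuousOn.comp hWc ?_ ?_).aestronglyMeasurable measurableSet_uIoc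
        · exact (continuous_const.prodMk continuous_id).continuousOn
        · exact fun z hz => hKO (hmem z hz)
      · refine Filter.Eventually.of_forall fun z hz s hs => ?_
        have h := hC (s, z) (hsub y hy s hs z hz)
        calc ‖W (s, z)‖ ≤ C := h
          _ ≤ |C| + 1 := by have := le_abs_self C; linarith
      · exact Filter.Eventually.of_forall fun z hz s hs =>
          hWd (s, z) (hKO (hsub y hy s hs z hz))
    have heq : (fun s => ∫ z in x..y, v s z) = fun s => u s y - u s x := by
      funext s
      exact intervalIntegral.integral_eq_sub_of_hasDerivAt (fun z _ => huv s z)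
        ((hvcont s).intervalIntegrable x y)
    rw [heq] at hder
    have hder3 : HasDerivAt (fun s => u s y - u s x) (pdt u t y - pdt u t x) t :=
      (hut y).hasDerivAt.sub (hut x).hasDerivAt
    exact hder3.unique hder
  have hGa : ∀ z ∈ Metric.ball x r, ContinuousAt (fun z' => W (t, z')) z := by
    intro z hz
    have hmem : (t, z) ∈ O := by
      apply hKO
      rw [Metric.mem_closedBall, Prod.dist_eq]
      exact max_le (by simpa using hrpos.le) (Metric.mem_ball.mp hz).le
    exact (hWc.continuousAt (hO.mem_nhds hmem)).comp
      ((continuous_const.prodMk continuous_id).continuousAt)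
  have hFTC : HasDerivAt (fun y => ∫ z in x..y, W (t, z)) (W (t, x)) x := by
    refine intervalIntegral.integral_hasDerivAt_right IntervalIntegrable.refl ?_
      (hGa x (Metric.mem_ball_self hrpos))
    exact ContinuousAt.stronglyMeasurableAtFilter Metric.isOpen_ball hGa x
      (Metric.mem_ball_self hrpos)
  have hφ : HasDerivAt (fun y => pdt u t y) (W (t, x)) x := by
    have hev : (fun y => pdt u t y) =ᶠ[nhds x]
        (fun y => pdt u t x + ∫ z in x..y, W (t, z)) := by
      refine Filter.eventuallyEq_of_mem (Metric.ball_mem_nhds x hrpos) (fun y hy => ?_)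
      have h := key y hy
      show pdt u t y = pdt u t x + ∫ z in x..y, W (t, z)
      linarith
    exact (hFTC.const_add (pdt u t x)).congr_of_eventuallyEq hev
  have hfin : pdt (fun s y => pdx u s y) t x = W (t, x) := (hWd (t, x) hp).deriv
  rw [hfin]
  exact hφ

/-- For a classical solution of the mesoscopic two-phase system with
`u` twice continuously differentiable in space and `σ = μ(c)∂ₓu − (γ(c)−1)ρθ`
continuously differentiable, the stress satisfies pointwise
`D_tσ = μ(c)∂ₓ(∂ₓσ/ρ) − ((γ(c)−1)/c_v(c) + 1)σ∂ₓu`. -/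
theorem stmt8 (μp μm γp γm kp km T : ℝ) (hT : 0 < T)
    (hconst : GoodConsts μp μm γp γm kp km)
    (c ρ θ u : ℝ → ℝ → ℝ)
    (hc : ContDiff ℝ 1 (uncurry c)) (hρ : ContDiff ℝ 1 (uncurry ρ))
    (hθ : ContDiff ℝ 1 (uncurry θ)) (hu : ContDiff ℝ 1 (uncurry u))
    (hu2 : ∀ t : ℝ, ContDiff ℝ 2 (u t))
    (hσ : ContDiff ℝ 1 (uncurry (sigm μp μm γp γm c ρ θ u)))
    (hrange : ∀ t ∈ Icc (0:ℝ) T, ∀ x : ℝ,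
      0 < ρ t x ∧ 0 < θ t x ∧ c t x ∈ Icc (0:ℝ) 1)
    (hsol : MesoEqns μp μm γp γm kp km T c ρ θ u) :
    ∀ t ∈ Icc (0:ℝ) T, ∀ x : ℝ,
      pdt (sigm μp μm γp γm c ρ θ u) t x
        + u t x * pdx (sigm μp μm γp γm c ρ θ u) t x
      = affc μp μm (c t x)
          * pdx (fun s y => pdx (sigm μp μm γp γm c ρ θ u) s y / ρ s y) t x
        - ((affc γp γm (c t x) - 1) / affc kp km (c t x) + 1)
            * sigm μp μm γp γm c ρ θ u t x * pdx u t x := by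
  obtain ⟨hμp, hμm, hγp, hγm, hkp, hkm⟩ := hconst
  obtain ⟨-, -, -, -, htrans, hmass, hmom, hener⟩ := hsol
  intro t ht x
  -- positivity
  have hc01 := (hrange t ht x).2.2
  have hρpos : 0 < ρ t x := (hrange t ht x).1
  have hmpos : 0 < affc μp μm (c t x) := by
    have h1 := hc01.1; have h2 := hc01.2
    unfold affc
    nlinarith [mul_le_mul_of_nonneg_left (min_le_left μp μm) h1,
      mul_le_mul_of_nonneg_left (min_le_right μp μm) (sub_nonneg.2 h2), lt_min hμp hμm]
  have hkpos : 0 < affc kp km (c t x) := by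
    have h1 := hc01.1; have h2 := hc01.2
    unfold affc
    nlinarith [mul_le_mul_of_nonneg_left (min_le_left kp km) h1,
      mul_le_mul_of_nonneg_left (min_le_right kp km) (sub_nonneg.2 h2), lt_min hkp hkm]
  -- joint C1 coefficient functions
  have hMf : ContDiff ℝ 1 (fun q : ℝ × ℝ => affc μp μm (c q.1 q.2)) := by
    have h : (fun q : ℝ × ℝ => affc μp μm (c q.1 q.2))
        = fun q => uncurry c q * μp + (1 - uncurry c q) * μm := rfl
    rw [h]
    exact (hc.mul contDiff_const).add ((contDiff_const.sub hc).mul contDiff_const)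
  have hGf : ContDiff ℝ 1 (fun q : ℝ × ℝ => affc γp γm (c q.1 q.2)) := by
    have h : (fun q : ℝ × ℝ => affc γp γm (c q.1 q.2))
        = fun q => uncurry c q * γp + (1 - uncurry c q) * γm := rfl
    rw [h]
    exact (hc.mul contDiff_const).add ((contDiff_const.sub hc).mul contDiff_const)
  have hPf : ContDiff ℝ 1
      (fun q : ℝ × ℝ => (affc γp γm (c q.1 q.2) - 1) * ρ q.1 q.2 * θ q.1 q.2) :=
    ((hGf.sub contDiff_const).mul hρ).mul hθ
  set O : Set (ℝ × ℝ) := {q | affc μp μm (c q.1 q.2) ≠ 0} with hOdef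
  have hOopen : IsOpen O := by
    have h : O = (fun q : ℝ × ℝ => affc μp μm (c q.1 q.2)) ⁻¹' ({0}ᶜ) := rfl
    rw [h]
    exact isOpen_compl_singleton.preimage hMf.continuous
  have hpO : (t, x) ∈ O := ne_of_gt hmpos
  have hvC : ContDiffOn ℝ 1 (uncurry (fun s y => pdx u s y)) O := by
    intro q hq
    have hq' : affc μp μm (c q.1 q.2) ≠ 0 := hq
    have hQ : ContDiffAt ℝ 1 (fun p : ℝ × ℝ =>
        (sigm μp μm γp γm c ρ θ u p.1 p.2
          + (affc γp γm (c p.1 p.2) - 1) * ρ p.1 p.2 * θ p.1 p.2)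
          / affc μp μm (c p.1 p.2)) q :=
      (hσ.contDiffAt.add hPf.contDiffAt).div hMf.contDiffAt hq'
    refine (hQ.congr_of_eventuallyEq ?_).contDiffWithinAt
    refine Filter.eventuallyEq_of_mem (hOopen.mem_nhds hq) (fun p hp' => ?_)
    have hne : affc μp μm (c p.1 p.2) ≠ 0 := hp'
    show pdx u p.1 p.2 = _
    rw [sigm]
    field_simp
    ring
  have hut : ∀ y : ℝ, DifferentiableAt ℝ (fun s => u s y) t :=
    fun y => (hasDerivAt_pdt hu t y).differentiableAt
  have huv : ∀ s y : ℝ, HasDerivAt (fun z => u s z) (pdx u s y) y :=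
    fun s y => ((hu2 s).differentiable two_ne_zero y).hasDerivAt
  have hvcont : ∀ s, Continuous (fun y => pdx u s y) :=
    fun s => (hu2 s).continuous_deriv one_le_two
  -- mixed partial: y ↦ ∂ₜu t y is differentiable at x
  have hschwarz : HasDerivAt (fun y => pdt u t y) (pdt (fun s y => pdx u s y) t x) x :=
    schwarz_ftc u O hOopen hpO hut huv hvcont hvC
  -- second space derivative of u
  have hvX2 : HasDerivAt (fun y => pdx u t y) (pdx (fun s y => pdx u s y) t x) x := by
    have h2 : ContDiff ℝ (1 + 1) (u t) := by exact_mod_cast hu2 t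
    have hd1 : ContDiff ℝ 1 (deriv (u t)) := (contDiff_succ_iff_deriv.mp h2).2.2
    exact (hd1.differentiable one_ne_zero x).hasDerivAt
  -- time derivative of ∂ₓu at (t,x)
  have hvdiff : DifferentiableAt ℝ (uncurry (fun s y => pdx u s y)) (t, x) :=
    (hvC.differentiableOn one_ne_zero _ hpO).differentiableAt (hOopen.mem_nhds hpO)
  have hvT2 : HasDerivAt (fun s => pdx u s x) (pdt (fun s y => pdx u s y) t x) t :=
    by have h := (hvdiff.comp t (show DifferentiableAt ℝ (fun s : ℝ => (s, x)) t from differentiableAt_id.prodMk (differentiableAt_const x))); exact h.hasDerivAt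
  -- momentum equation in nonconservative form, at every point (t, y)
  have emom : ∀ y : ℝ, pdx (sigm μp μm γp γm c ρ θ u) t y
      = ρ t y * (pdt u t y + u t y * pdx u t y) := by
    intro y
    have e1 : pdt (fun s y => ρ s y * u s y) t y
        = pdt ρ t y * u t y + ρ t y * pdt u t y := by
      have h := ((hasDerivAt_pdt hρ t y).mul (hasDerivAt_pdt hu t y)).deriv
      simp only [pdt, pdx] at h ⊢
      linear_combination h
    have e2 : pdx (fun s y => ρ s y * u s y) t y
        = pdx ρ t y * u t y + ρ t y * pdx u t y := by
      have h := ((hasDerivAt_pdx hρ t y).mul (hasDerivAt_pdx hu t y)).deriv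
      simp only [pdt, pdx] at h ⊢
      linear_combination h
    have e3 : pdx (fun s y => ρ s y * u s y ^ 2) t y
        = pdx ρ t y * u t y ^ 2 + ρ t y * (2 * u t y * pdx u t y) := by
      have h := ((hasDerivAt_pdx hρ t y).mul ((hasDerivAt_pdx hu t y).pow 2)).deriv
      simp only [pdt, pdx] at h ⊢
      norm_num at h
      linear_combination h
    have hm := hmom t ht y
    rw [e1, e3] at hm
    have hms := hmass t ht y
    rw [e2] at hms
    linear_combination u t y * hms - hm
  -- expansions of the energy equation terms at (t,x)
  have haffkT : HasDerivAt (fun s => c s x * kp + (1 - c s x) * km)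
      (pdt c t x * kp + (0 - pdt c t x) * km) t :=
    ((hasDerivAt_pdt hc t x).mul_const kp).add
      (((hasDerivAt_const t (1:ℝ)).sub (hasDerivAt_pdt hc t x)).mul_const km)
  have haffkX : HasDerivAt (fun y => c t y * kp + (1 - c t y) * km)
      (pdx c t x * kp + (0 - pdx c t x) * km) x :=
    ((hasDerivAt_pdx hc t x).mul_const kp).add
      (((hasDerivAt_const x (1:ℝ)).sub (hasDerivAt_pdx hc t x)).mul_const km)
  have hET := (((hasDerivAt_pdt hu t x).pow 2).div_const 2).add
    (haffkT.mul (hasDerivAt_pdt hθ t x))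
  have hEX := (((hasDerivAt_pdx hu t x).pow 2).div_const 2).add
    (haffkX.mul (hasDerivAt_pdx hθ t x))
  have e_ET : pdt (fun s y => ρ s y * Etot kp km c θ u s y) t x
      = pdt ρ t x * (u t x ^ 2 / 2 + affc kp km (c t x) * θ t x)
        + ρ t x * (u t x * pdt u t x
          + ((kp - km) * pdt c t x * θ t x + affc kp km (c t x) * pdt θ t x)) := by
    have h := ((hasDerivAt_pdt hρ t x).mul hET).deriv
    simp only [pdt, pdx, Etot, affc] at h ⊢
    norm_num at h
    linear_combination h
  have e_EXU : pdx (fun s y => ρ s y * Etot kp km c θ u s y * u s y) t x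
      = (pdx ρ t x * (u t x ^ 2 / 2 + affc kp km (c t x) * θ t x)
          + ρ t x * (u t x * pdx u t x
            + ((kp - km) * pdx c t x * θ t x + affc kp km (c t x) * pdx θ t x))) * u t x
        + ρ t x * (u t x ^ 2 / 2 + affc kp km (c t x) * θ t x) * pdx u t x := by
    have h := (((hasDerivAt_pdx hρ t x).mul hEX).mul (hasDerivAt_pdx hu t x)).deriv
    simp only [pdt, pdx, Etot, affc] at h ⊢
    norm_num at h
    linear_combination h
  have e_sgu : pdx (fun s y => sigm μp μm γp γm c ρ θ u s y * u s y) t x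
      = pdx (sigm μp μm γp γm c ρ θ u) t x * u t x + sigm μp μm γp γm c ρ θ u t x * pdx u t x := by
    have h := ((hasDerivAt_pdx hσ t x).mul (hasDerivAt_pdx hu t x)).deriv
    simp only [pdt, pdx] at h ⊢
    linear_combination h
  have e2x : pdx (fun s y => ρ s y * u s y) t x
      = pdx ρ t x * u t x + ρ t x * pdx u t x := by
    have h := ((hasDerivAt_pdx hρ t x).mul (hasDerivAt_pdx hu t x)).deriv
    simp only [pdt, pdx] at h ⊢
    linear_combination h
  have hmassx : pdt ρ t x + (pdx ρ t x * u t x + ρ t x * pdx u t x) = 0 := by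
    have h := hmass t ht x
    rw [e2x] at h
    exact h
  have htransx := htrans t ht x
  have hmomx := emom x
  -- internal energy equation
  have hE := hener t ht x
  rw [e_ET, e_EXU, e_sgu] at hE
  have e_energy : ρ t x * affc kp km (c t x) * (pdt θ t x + u t x * pdx θ t x)
      = sigm μp μm γp γm c ρ θ u t x * pdx u t x := by
    linear_combination hE - (u t x ^ 2 / 2 + affc kp km (c t x) * θ t x) * hmassx
      - ρ t x * θ t x * (kp - km) * htransx + u t x * hmomx
  have e_theta : ρ t x * (pdt θ t x + u t x * pdx θ t x)
      = sigm μp μm γp γm c ρ θ u t x * pdx u t x / affc kp km (c t x) := by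
    rw [eq_div_iff (ne_of_gt hkpos)]
    linear_combination e_energy
  -- expansions of the stress derivatives
  have haffμT : HasDerivAt (fun s => c s x * μp + (1 - c s x) * μm)
      (pdt c t x * μp + (0 - pdt c t x) * μm) t :=
    ((hasDerivAt_pdt hc t x).mul_const μp).add
      (((hasDerivAt_const t (1:ℝ)).sub (hasDerivAt_pdt hc t x)).mul_const μm)
  have haffμX : HasDerivAt (fun y => c t y * μp + (1 - c t y) * μm)
      (pdx c t x * μp + (0 - pdx c t x) * μm) x :=
    ((hasDerivAt_pdx hc t x).mul_const μp).add
      (((hasDerivAt_const x (1:ℝ)).sub (hasDerivAt_pdx hc t x)).mul_const μm)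
  have haffγT : HasDerivAt (fun s => c s x * γp + (1 - c s x) * γm)
      (pdt c t x * γp + (0 - pdt c t x) * γm) t :=
    ((hasDerivAt_pdt hc t x).mul_const γp).add
      (((hasDerivAt_const t (1:ℝ)).sub (hasDerivAt_pdt hc t x)).mul_const γm)
  have haffγX : HasDerivAt (fun y => c t y * γp + (1 - c t y) * γm)
      (pdx c t x * γp + (0 - pdx c t x) * γm) x :=
    ((hasDerivAt_pdx hc t x).mul_const γp).add
      (((hasDerivAt_const x (1:ℝ)).sub (hasDerivAt_pdx hc t x)).mul_const γm)
  have e_sT : pdt (sigm μp μm γp γm c ρ θ u) t x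
      = (μp - μm) * pdt c t x * pdx u t x
        + affc μp μm (c t x) * pdt (fun s y => pdx u s y) t x
        - ((γp - γm) * pdt c t x * ρ t x * θ t x
          + (affc γp γm (c t x) - 1) * (pdt ρ t x * θ t x + ρ t x * pdt θ t x)) := by
    have h := ((haffμT.mul hvT2).sub
      (((haffγT.sub_const 1).mul (hasDerivAt_pdt hρ t x)).mul (hasDerivAt_pdt hθ t x))).deriv
    simp only [pdt, pdx, sigm, affc, Pi.mul_apply] at h ⊢
    linear_combination h
  have e_sX : pdx (sigm μp μm γp γm c ρ θ u) t x
      = (μp - μm) * pdx c t x * pdx u t x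
        + affc μp μm (c t x) * pdx (fun s y => pdx u s y) t x
        - ((γp - γm) * pdx c t x * ρ t x * θ t x
          + (affc γp γm (c t x) - 1) * (pdx ρ t x * θ t x + ρ t x * pdx θ t x)) := by
    have h := ((haffμX.mul hvX2).sub
      (((haffγX.sub_const 1).mul (hasDerivAt_pdx hρ t x)).mul (hasDerivAt_pdx hθ t x))).deriv
    simp only [pdt, pdx, sigm, affc, Pi.mul_apply] at h ⊢
    linear_combination h
  have e_R : pdx (fun s y => pdx (sigm μp μm γp γm c ρ θ u) s y / ρ s y) t x
      = pdt (fun s y => pdx u s y) t x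
        + (pdx u t x * pdx u t x + u t x * pdx (fun s y => pdx u s y) t x) := by
    have hDR := hschwarz.add ((hasDerivAt_pdx hu t x).mul hvX2)
    have hfe : (fun y => pdx (sigm μp μm γp γm c ρ θ u) t y / ρ t y)
        = (fun y => pdt u t y + u t y * pdx u t y) := by
      funext y
      rw [emom y]
      exact mul_div_cancel_left₀ _ (ne_of_gt (hrange t ht y).1)
    have hDR2 : HasDerivAt (fun y => pdx (sigm μp μm γp γm c ρ θ u) t y / ρ t y)
        (pdt (fun s y => pdx u s y) t x
          + (pdx u t x * pdx u t x + u t x * pdx (fun s y => pdx u s y) t x)) x := by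
      rw [hfe]; exact hDR
    have h := hDR2.deriv
    simp only [pdt, pdx] at h ⊢
    linear_combination h
  have hsgdef : sigm μp μm γp γm c ρ θ u t x
      = affc μp μm (c t x) * pdx u t x - (affc γp γm (c t x) - 1) * ρ t x * θ t x := rfl
  rw [e_R, e_sT, e_sX]
  linear_combination ((μp - μm) * pdx u t x - (γp - γm) * ρ t x * θ t x) * htransx
    - (affc γp γm (c t x) - 1) * θ t x * hmassx
    - (affc γp γm (c t x) - 1) * e_theta
    + pdx u t x * hsgdef
end

section
/- Let (c, ρ, θ, u) be a classical solution of the mesoscopic two-phase Navier–Stokes system on [0,T], spatially 1-periodic, with σ := μ(c)∂ₓu − (γ(c)−1)ρθ continuously differentiable, and let β : ℝ → ℝ be continuously differentiable. Then the renormalized equation holds pointwise: ∂ₜ(β(σ)/μ(c)) + ∂ₓ(u·β(σ)/μ(c)) − ∂ₓ(∂ₓσ/ρ)·β'(σ) = −(∂ₓu/μ(c))·(σβ'(σ) − β(σ)) − ((γ(c)−1)/(c_v(c)μ(c)))·σ·∂ₓu·β'(σ). -/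
open Set Function MeasureTheory intervalIntegral

section Helpers

lemma pdt_eq_fderiv {f : ℝ → ℝ → ℝ} (hf : ContDiff ℝ 1 (uncurry f)) (t x : ℝ) :
    pdt f t x = fderiv ℝ (uncurry f) (t, x) (1, 0) := by
  have hD : HasFDerivAt (uncurry f) (fderiv ℝ (uncurry f) (t, x)) (t, x) :=
    (hf.differentiable one_ne_zero (t, x)).hasFDerivAt
  have hg : HasDerivAt (fun s : ℝ => (s, x)) ((1:ℝ), (0:ℝ)) t :=
    (hasDerivAt_id t).prodMk (hasDerivAt_const t x)
  exact (hD.comp_hasDerivAt t hg).deriv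

lemma pdx_eq_fderiv {f : ℝ → ℝ → ℝ} (hf : ContDiff ℝ 1 (uncurry f)) (t x : ℝ) :
    pdx f t x = fderiv ℝ (uncurry f) (t, x) (0, 1) := by
  have hD : HasFDerivAt (uncurry f) (fderiv ℝ (uncurry f) (t, x)) (t, x) :=
    (hf.differentiable one_ne_zero (t, x)).hasFDerivAt
  have hg : HasDerivAt (fun y : ℝ => (t, y)) ((0:ℝ), (1:ℝ)) x :=
    (hasDerivAt_const x t).prodMk (hasDerivAt_id x)
  exact (hD.comp_hasDerivAt x hg).deriv

lemma continuous_pdt {f : ℝ → ℝ → ℝ} (hf : ContDiff ℝ 1 (uncurry f)) :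
    Continuous (fun p : ℝ × ℝ => pdt f p.1 p.2) := by
  have : Continuous (fun p : ℝ × ℝ => fderiv ℝ (uncurry f) p (1, 0)) :=
    (hf.continuous_fderiv one_ne_zero).clm_apply continuous_const
  refine this.congr fun p => ?_
  exact (pdt_eq_fderiv hf p.1 p.2).symm

lemma continuous_pdx {f : ℝ → ℝ → ℝ} (hf : ContDiff ℝ 1 (uncurry f)) :
    Continuous (fun p : ℝ × ℝ => pdx f p.1 p.2) := by
  have : Continuous (fun p : ℝ × ℝ => fderiv ℝ (uncurry f) p (0, 1)) :=
    (hf.continuous_fderiv one_ne_zero).clm_apply continuous_const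
  refine this.congr fun p => ?_
  exact (pdx_eq_fderiv hf p.1 p.2).symm

lemma contDiff_affc {c : ℝ → ℝ → ℝ} (hc : ContDiff ℝ 1 (uncurry c)) (a b : ℝ) :
    ContDiff ℝ 1 (fun p : ℝ × ℝ => affc a b (c p.1 p.2)) := by
  have h : ContDiff ℝ 1 (fun r : ℝ => affc a b r) := by
    simp only [affc]
    exact (contDiff_id.mul contDiff_const).add
      ((contDiff_const.sub contDiff_id).mul contDiff_const)
  exact h.comp hc

lemma hasDerivAt_affc {c : ℝ → ℝ} {c' : ℝ} {r : ℝ} (h : HasDerivAt c c' r) (a b : ℝ) :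
    HasDerivAt (fun s => affc a b (c s)) ((a - b) * c') r := by
  have h2 : HasDerivAt (fun s => c s * a + (1 - c s) * b) ((a - b) * c') r := by
    have h3 := (h.mul_const a).add (((hasDerivAt_const r (1:ℝ)).sub h).mul_const b)
    exact h3.congr_deriv (by ring)
  exact h2

lemma affc_pos {a b s : ℝ} (ha : 0 < a) (hb : 0 < b) (hs : s ∈ Icc (0:ℝ) 1) :
    0 < affc a b s := by
  rcases hs with ⟨h0, h1⟩
  simp only [affc]
  rcases le_total a b with hab | hab
  · nlinarith [mul_le_mul_of_nonneg_left hab (by linarith : (0:ℝ) ≤ 1 - s)]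
  · nlinarith [mul_le_mul_of_nonneg_left hab h0]

open Metric in
lemma schwarz_aux {u v vt : ℝ → ℝ → ℝ} {t x ε : ℝ} (hε : 0 < ε)
    (h1 : ∀ s ∈ ball t ε, ∀ y ∈ ball x ε, HasDerivAt (fun z => u s z) (v s y) y)
    (h2 : ∀ s ∈ ball t ε, ∀ y ∈ ball x ε, HasDerivAt (fun r => v r y) (vt s y) s)
    (h3 : ∀ s ∈ ball t ε, ContinuousOn (fun z => v s z) (ball x ε))
    (h4 : ContinuousOn (fun p : ℝ × ℝ => vt p.1 p.2) (ball t ε ×ˢ ball x ε))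
    (hx : DifferentiableAt ℝ (fun s => u s x) t) :
    HasDerivAt (fun y => deriv (fun s => u s y) t) (vt t x) x := by
  set δ := ε / 2 with hδdef
  have hδ : 0 < δ := by positivity
  have hδε : δ < ε := by rw [hδdef]; linarith
  have hball : ∀ a : ℝ, ball a δ ⊆ ball a ε := fun a => ball_subset_ball hδε.le
  have ht0 : t ∈ ball t ε := mem_ball_self hε
  have h4t : ContinuousOn (fun z => vt t z) (ball x ε) := by
    have : ContinuousOn ((fun p : ℝ × ℝ => vt p.1 p.2) ∘ (fun z => (t, z))) (ball x ε) :=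
      h4.comp ((continuous_const.prodMk continuous_id).continuousOn)
        (fun z hz => ⟨ht0, hz⟩)
    exact this
  have hKsub : (Icc (t - δ) (t + δ) ×ˢ Icc (x - δ) (x + δ)) ⊆ ball t ε ×ˢ ball x ε := by
    rintro ⟨s, z⟩ ⟨hs, hz⟩
    rcases hs with ⟨hs1, hs2⟩; rcases hz with ⟨hz1, hz2⟩
    constructor
    · rw [mem_ball, Real.dist_eq, abs_lt]; constructor <;> linarith
    · rw [mem_ball, Real.dist_eq, abs_lt]; constructor <;> linarith
  obtain ⟨C, hC⟩ := (isCompact_Icc.prod isCompact_Icc).exists_bound_of_continuousOn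
    (h4.mono hKsub)
  have hbIcc : ∀ a : ℝ, ball a δ ⊆ Icc (a - δ) (a + δ) := by
    intro a z hz
    rw [mem_ball, Real.dist_eq, abs_lt] at hz
    exact ⟨by linarith [hz.1], by linarith [hz.2]⟩
  have key : ∀ y ∈ ball x δ, deriv (fun s => u s y) t
      = deriv (fun s => u s x) t + ∫ z in x..y, vt t z := by
    intro y hy
    have huIcc : uIcc x y ⊆ ball x δ :=
      ((convex_ball x δ).ordConnected).uIcc_subset (mem_ball_self hδ) hy
    have huIcc' : uIcc x y ⊆ ball x ε := huIcc.trans (hball x)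
    have huIoc : Set.uIoc x y ⊆ ball x ε := Set.uIoc_subset_uIcc.trans huIcc'
    have hftc : ∀ s ∈ ball t δ, (∫ z in x..y, v s z) = u s y - u s x := by
      intro s hs
      refine intervalIntegral.integral_eq_sub_of_hasDerivAt
        (fun z hz => h1 s (hball t hs) z (huIcc' hz)) ?_
      exact ((h3 s (hball t hs)).mono huIcc').intervalIntegrable
    have hF_meas : ∀ᶠ s in nhds t, AEStronglyMeasurable (fun z => v s z)
        (volume.restrict (Set.uIoc x y)) := by
      refine Filter.eventually_of_mem (ball_mem_nhds t hδ) (fun s hs => ?_)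
      exact ((h3 s (hball t hs)).mono huIoc).aestronglyMeasurable measurableSet_uIoc
    have hF_int : IntervalIntegrable (fun z => v t z) volume x y :=
      ((h3 t ht0).mono huIcc').intervalIntegrable
    have hF'_meas : AEStronglyMeasurable (fun z => vt t z) (volume.restrict (Set.uIoc x y)) :=
      (h4t.mono huIoc).aestronglyMeasurable measurableSet_uIoc
    have h_bound : ∀ᵐ z ∂(volume : Measure ℝ), z ∈ Set.uIoc x y → ∀ s ∈ ball t δ,
        ‖vt s z‖ ≤ C := by
      refine Filter.Eventually.of_forall (fun z hz s hs => ?_)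
      exact hC (s, z) ⟨hbIcc t hs, hbIcc x (huIcc (Set.uIoc_subset_uIcc hz))⟩
    have h_diff : ∀ᵐ z ∂(volume : Measure ℝ), z ∈ Set.uIoc x y → ∀ s ∈ ball t δ,
        HasDerivAt (fun r => v r z) (vt s z) s :=
      Filter.Eventually.of_forall (fun z hz s hs => h2 s (hball t hs) z (huIoc hz))
    have hdom := (intervalIntegral.hasDerivAt_integral_of_dominated_loc_of_deriv_le
      (ball_mem_nhds t hδ) hF_meas hF_int hF'_meas h_bound (intervalIntegrable_const) h_diff).2
    have heq : (fun s => u s x + ∫ z in x..y, v s z) =ᶠ[nhds t] (fun s => u s y) := by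
      refine Filter.eventually_of_mem (ball_mem_nhds t hδ) (fun s hs => ?_)
      show u s x + (∫ z in x..y, v s z) = u s y
      rw [hftc s hs]; ring
    have hD : HasDerivAt (fun s => u s y)
        (deriv (fun s => u s x) t + ∫ z in x..y, vt t z) t :=
      (hx.hasDerivAt.add hdom).congr_of_eventuallyEq heq.symm
    exact hD.deriv
  have hint : HasDerivAt (fun y => ∫ z in x..y, vt t z) (vt t x) x := by
    refine intervalIntegral.integral_hasDerivAt_right ?_ ?_ ?_
    · exact IntervalIntegrable.refl
    · exact (h4t.stronglyMeasurableAtFilter isOpen_ball x (mem_ball_self hε))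
    · exact h4t.continuousAt (ball_mem_nhds x hε)
  have hg : HasDerivAt (fun y => deriv (fun s => u s x) t + ∫ z in x..y, vt t z)
      (vt t x) x := by
    have := (hasDerivAt_const x (deriv (fun s => u s x) t)).add hint
    simpa using hint
  refine hg.congr_of_eventuallyEq ?_
  exact Filter.eventually_of_mem (ball_mem_nhds x hδ) (fun y hy => key y hy)

lemma final_algebra (μp μm γp γm : ℝ)
    (b b' v0 Uv mv kv gv Rv Th Sv cx rx thx tht vtx vxx ct rt St Sx : ℝ)
    (hmv : mv ≠ 0) (hkv : kv ≠ 0) (hRv : Rv ≠ 0)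
    (htr : ct + Uv * cx = 0)
    (hmass : rt + (rx * Uv + Rv * v0) = 0)
    (heng : Rv * kv * (tht + Uv * thx) = Sv * v0)
    (hS : Sv = mv * v0 - (gv - 1) * Rv * Th)
    (hSt : St = (μp - μm) * ct * v0 + mv * vtx
        - ((γp - γm) * ct * Rv * Th + (gv - 1) * (rt * Th + Rv * tht)))
    (hSx : Sx = (μp - μm) * cx * v0 + mv * vxx
        - ((γp - γm) * cx * Rv * Th + (gv - 1) * (rx * Th + Rv * thx))) :
    (b' * St * mv - b * ((μp - μm) * ct)) / mv ^ 2
      + ((v0 * b + Uv * (b' * Sx)) * mv - Uv * b * ((μp - μm) * cx)) / mv ^ 2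
      - (vtx + (v0 * v0 + Uv * vxx)) * b'
    = -(v0 / mv) * (Sv * b' - b) - ((gv - 1) / (kv * mv)) * (Sv * v0) * b' := by
  have hct : ct = -(Uv * cx) := by linarith
  have hrt : rt = -(rx * Uv + Rv * v0) := by linarith
  have htht : tht = (Sv * v0 - Rv * kv * Uv * thx) / (Rv * kv) := by
    field_simp
    linear_combination heng
  subst hct hrt htht hSt hSx hS
  field_simp
  ring

end Helpers

/-- Renormalized equation for the Cauchy stress: for any `C¹`
function `β`, a classical solution of the mesoscopic two-phase system satisfies
`∂ₜ(β(σ)/μ(c)) + ∂ₓ(uβ(σ)/μ(c)) − ∂ₓ(∂ₓσ/ρ)β'(σ)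
  = −(∂ₓu/μ(c))(σβ'(σ) − β(σ)) − ((γ(c)−1)/(c_v(c)μ(c)))σ∂ₓu β'(σ)`. -/
theorem stmt9 (μp μm γp γm kp km T : ℝ) (hT : 0 < T)
    (hconst : GoodConsts μp μm γp γm kp km)
    (c ρ θ u : ℝ → ℝ → ℝ)
    (hc : ContDiff ℝ 1 (uncurry c)) (hρ : ContDiff ℝ 1 (uncurry ρ))
    (hθ : ContDiff ℝ 1 (uncurry θ)) (hu : ContDiff ℝ 1 (uncurry u))
    (hu2 : ∀ t : ℝ, ContDiff ℝ 2 (u t))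
    (hσ : ContDiff ℝ 1 (uncurry (sigm μp μm γp γm c ρ θ u)))
    (hrange : ∀ t ∈ Icc (0:ℝ) T, ∀ x : ℝ,
      0 < ρ t x ∧ 0 < θ t x ∧ c t x ∈ Icc (0:ℝ) 1)
    (hsol : MesoEqns μp μm γp γm kp km T c ρ θ u)
    (β : ℝ → ℝ) (hβ : ContDiff ℝ 1 β) :
    ∀ t ∈ Icc (0:ℝ) T, ∀ x : ℝ,
      pdt (fun s y => β (sigm μp μm γp γm c ρ θ u s y) / affc μp μm (c s y)) t x
        + pdx (fun s y =>
            u s y * β (sigm μp μm γp γm c ρ θ u s y) / affc μp μm (c s y)) t x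
        - pdx (fun s y => pdx (sigm μp μm γp γm c ρ θ u) s y / ρ s y) t x
            * deriv β (sigm μp μm γp γm c ρ θ u t x)
      = -(pdx u t x / affc μp μm (c t x))
            * (sigm μp μm γp γm c ρ θ u t x * deriv β (sigm μp μm γp γm c ρ θ u t x)
                - β (sigm μp μm γp γm c ρ θ u t x))
        - ((affc γp γm (c t x) - 1) / (affc kp km (c t x) * affc μp μm (c t x)))
            * (sigm μp μm γp γm c ρ θ u t x * pdx u t x)
            * deriv β (sigm μp μm γp γm c ρ θ u t x) := by
  obtain ⟨hμp, hμm, hγp, hγm, hkp, hkm⟩ := hconst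
  obtain ⟨-, -, -, -, htrans, hmass, hmom, heng⟩ := hsol
  intro t ht x
  have hcIcc : c t x ∈ Icc (0:ℝ) 1 := (hrange t ht x).2.2
  have hmpos : 0 < affc μp μm (c t x) := affc_pos hμp hμm hcIcc
  have hmne : affc μp μm (c t x) ≠ 0 := hmpos.ne'
  have hkne : affc kp km (c t x) ≠ 0 := (affc_pos hkp hkm hcIcc).ne'
  have hRpos : ∀ y, 0 < ρ t y := fun y => (hrange t ht y).1
  have hRne : ρ t x ≠ 0 := (hRpos x).ne'
  have hM : ContDiff ℝ 1 (fun p : ℝ × ℝ => affc μp μm (c p.1 p.2)) :=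
    contDiff_affc hc μp μm
  have hG : ContDiff ℝ 1 (fun p : ℝ × ℝ => affc γp γm (c p.1 p.2)) :=
    contDiff_affc hc γp γm
  -- neighborhood where μ(c) ≠ 0
  obtain ⟨ε, hε, hball⟩ : ∃ ε > 0, ∀ s y, s ∈ Metric.ball t ε → y ∈ Metric.ball x ε →
      affc μp μm (c s y) ≠ 0 := by
    have hopen : IsOpen {p : ℝ × ℝ | affc μp μm (c p.1 p.2) ≠ 0} :=
      isOpen_compl_singleton.preimage hM.continuous
    rcases Metric.isOpen_iff.mp hopen (t, x) hmne with ⟨ε, hε, hsub⟩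
    refine ⟨ε, hε, fun s y hs hy => ?_⟩
    have : (s, y) ∈ Metric.ball (t, x) ε := by
      rw [← ball_prod_same]; exact ⟨hs, hy⟩
    exact hsub this
  -- the function N = μ(c) ∂ₓu, globally C¹
  set N : ℝ → ℝ → ℝ := fun s y => sigm μp μm γp γm c ρ θ u s y
      + (affc γp γm (c s y) - 1) * ρ s y * θ s y with hN_def
  have hNc : ContDiff ℝ 1 (uncurry N) :=
    hσ.add (((hG.sub contDiff_const).mul hρ).mul hθ)
  have hNm : ∀ s y, N s y = affc μp μm (c s y) * pdx u s y := by
    intro s y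
    simp only [hN_def, sigm]
    ring
  -- time derivative of ∂ₓu
  set vt : ℝ → ℝ → ℝ := fun s y => (pdt N s y * affc μp μm (c s y)
      - N s y * ((μp - μm) * pdt c s y)) / affc μp μm (c s y) ^ 2 with hvt_def
  have h2 : ∀ s ∈ Metric.ball t ε, ∀ y ∈ Metric.ball x ε,
      HasDerivAt (fun r => pdx u r y) (vt s y) s := by
    intro s hs y hy
    have hne := hball s y hs hy
    have hdiv := (hasDerivAt_pdt hNc s y).div
      (hasDerivAt_affc (hasDerivAt_pdt hc s y) μp μm) hne
    have heq : (fun r => pdx u r y) =ᶠ[nhds s]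
        (fun r => N r y / affc μp μm (c r y)) := by
      refine Filter.eventually_of_mem (Metric.isOpen_ball.mem_nhds hs) (fun r hr => ?_)
      have hne' := hball r y hr hy
      show pdx u r y = N r y / affc μp μm (c r y)
      rw [hNm r y]
      exact (mul_div_cancel_left₀ _ hne').symm
    exact hdiv.congr_of_eventuallyEq heq
  have h1 : ∀ s ∈ Metric.ball t ε, ∀ y ∈ Metric.ball x ε,
      HasDerivAt (fun z => u s z) (pdx u s y) y :=
    fun s _ y _ => hasDerivAt_pdx hu s y
  have h3 : ∀ s ∈ Metric.ball t ε, ContinuousOn (fun z => pdx u s z) (Metric.ball x ε) := by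
    intro s hs
    have hcont : ContinuousOn (fun z => N s z / affc μp μm (c s z)) (Metric.ball x ε) := by
      refine ContinuousOn.div ?_ ?_ (fun y hy => hball s y hs hy)
      · exact (hNc.continuous.comp (Continuous.prodMk_right s)).continuousOn
      · exact (hM.continuous.comp (Continuous.prodMk_right s)).continuousOn
    refine hcont.congr (fun y hy => ?_)
    show pdx u s y = N s y / affc μp μm (c s y)
    rw [hNm s y]
    exact (mul_div_cancel_left₀ _ (hball s y hs hy)).symm
  have h4 : ContinuousOn (fun p : ℝ × ℝ => vt p.1 p.2)
      (Metric.ball t ε ×ˢ Metric.ball x ε) := by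
    simp only [hvt_def]
    refine ContinuousOn.div ?_ ?_ ?_
    · exact (((continuous_pdt hNc).mul hM.continuous).sub
        (hNc.continuous.mul (continuous_const.mul (continuous_pdt hc)))).continuousOn
    · exact (hM.continuous.pow 2).continuousOn
    · intro p hp; exact pow_ne_zero 2 (hball p.1 p.2 hp.1 hp.2)
  have hx0 : DifferentiableAt ℝ (fun s => u s x) t :=
    (hasDerivAt_pdt hu t x).differentiableAt
  have hSch : HasDerivAt (fun y => deriv (fun s => u s y) t) (vt t x) x :=
    schwarz_aux hε h1 h2 h3 h4 hx0
  have hvt_tx : HasDerivAt (fun r => pdx u r x) (vt t x) t :=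
    h2 t (Metric.mem_ball_self hε) x (Metric.mem_ball_self hε)
  -- second spatial derivative of u
  have hu2' : ContDiff ℝ 1 (deriv (u t)) := by
    have h := hu2 t
    rw [show (2 : WithTop ℕ∞) = 1 + 1 by norm_num] at h
    exact (contDiff_succ_iff_deriv.mp h).2.2
  have hvxx : HasDerivAt (fun z => pdx u t z) (deriv (deriv (u t)) x) x :=
    ((hu2'.differentiable one_ne_zero) x).hasDerivAt
  -- mass equation expanded, for all y
  have hmassy : ∀ y, pdt ρ t y + (pdx ρ t y * u t y + ρ t y * pdx u t y) = 0 := by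
    intro y
    have h := hmass t ht y
    have hp : pdx (fun s y => ρ s y * u s y) t y
        = pdx ρ t y * u t y + ρ t y * pdx u t y :=
      ((hasDerivAt_pdx hρ t y).mul (hasDerivAt_pdx hu t y)).deriv
    rw [hp] at h
    exact h
  -- momentum equation, for all y
  have hmomy : ∀ y, ρ t y * (pdt u t y + u t y * pdx u t y)
      = pdx (sigm μp μm γp γm c ρ θ u) t y := by
    intro y
    have h := hmom t ht y
    have h1' : pdt (fun s y => ρ s y * u s y) t y
        = pdt ρ t y * u t y + ρ t y * pdt u t y :=
      ((hasDerivAt_pdt hρ t y).mul (hasDerivAt_pdt hu t y)).deriv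
    have h2' : pdx (fun s y => ρ s y * u s y ^ 2) t y
        = pdx ρ t y * u t y ^ 2 + ρ t y * (2 * u t y ^ 1 * pdx u t y) :=
      ((hasDerivAt_pdx hρ t y).mul ((hasDerivAt_pdx hu t y).pow 2)).deriv
    rw [h1', h2'] at h
    have hm := hmassy y
    linear_combination h - u t y * hm
  have hRfun : (fun y => pdx (sigm μp μm γp γm c ρ θ u) t y / ρ t y)
      = fun y => pdt u t y + u t y * pdx u t y := by
    funext y
    rw [← hmomy y]
    exact mul_div_cancel_left₀ _ (hRpos y).ne'
  -- J term
  have eJ : pdx (fun s y => pdx (sigm μp μm γp γm c ρ θ u) s y / ρ s y) t x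
      = vt t x + (pdx u t x * pdx u t x + u t x * deriv (deriv (u t)) x) := by
    show deriv (fun y => pdx (sigm μp μm γp γm c ρ θ u) t y / ρ t y) x = _
    rw [hRfun]
    have hSch' : HasDerivAt (fun y => pdt u t y) (vt t x) x := hSch
    exact (hSch'.add ((hasDerivAt_pdx hu t x).mul hvxx)).deriv
  -- energy equation, at (t,x)
  have hEt : HasDerivAt (fun s => Etot kp km c θ u s x)
      (u t x * pdt u t x + ((kp - km) * pdt c t x * θ t x
        + affc kp km (c t x) * pdt θ t x)) t := by
    have h : HasDerivAt (fun s => u s x ^ 2 / 2 + affc kp km (c s x) * θ s x)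
        (u t x * pdt u t x + ((kp - km) * pdt c t x * θ t x
          + affc kp km (c t x) * pdt θ t x)) t := by
      have h3 := (((hasDerivAt_pdt hu t x).pow 2).div_const 2).add
        ((hasDerivAt_affc (hasDerivAt_pdt hc t x) kp km).mul (hasDerivAt_pdt hθ t x))
      exact h3.congr_deriv (by ring)
    exact h
  have hEx : HasDerivAt (fun z => Etot kp km c θ u t z)
      (u t x * pdx u t x + ((kp - km) * pdx c t x * θ t x
        + affc kp km (c t x) * pdx θ t x)) x := by
    have h : HasDerivAt (fun z => u t z ^ 2 / 2 + affc kp km (c t z) * θ t z)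
        (u t x * pdx u t x + ((kp - km) * pdx c t x * θ t x
          + affc kp km (c t x) * pdx θ t x)) x := by
      have h3 := (((hasDerivAt_pdx hu t x).pow 2).div_const 2).add
        ((hasDerivAt_affc (hasDerivAt_pdx hc t x) kp km).mul (hasDerivAt_pdx hθ t x))
      exact h3.congr_deriv (by ring)
    exact h
  have hengfinal : ρ t x * affc kp km (c t x) * (pdt θ t x + u t x * pdx θ t x)
      = sigm μp μm γp γm c ρ θ u t x * pdx u t x := by
    have he := heng t ht x
    have e1 : pdt (fun s y => ρ s y * Etot kp km c θ u s y) t x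
        = pdt ρ t x * (u t x ^ 2 / 2 + affc kp km (c t x) * θ t x)
          + ρ t x * (u t x * pdt u t x + ((kp - km) * pdt c t x * θ t x
            + affc kp km (c t x) * pdt θ t x)) :=
      ((hasDerivAt_pdt hρ t x).mul hEt).deriv
    have e2 : pdx (fun s y => ρ s y * Etot kp km c θ u s y * u s y) t x
        = (pdx ρ t x * (u t x ^ 2 / 2 + affc kp km (c t x) * θ t x)
            + ρ t x * (u t x * pdx u t x + ((kp - km) * pdx c t x * θ t x
              + affc kp km (c t x) * pdx θ t x))) * u t x
          + ρ t x * (u t x ^ 2 / 2 + affc kp km (c t x) * θ t x) * pdx u t x :=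
      (((hasDerivAt_pdx hρ t x).mul hEx).mul (hasDerivAt_pdx hu t x)).deriv
    have e3 : pdx (fun s y => sigm μp μm γp γm c ρ θ u s y * u s y) t x
        = pdx (sigm μp μm γp γm c ρ θ u) t x * u t x
          + sigm μp μm γp γm c ρ θ u t x * pdx u t x :=
      ((hasDerivAt_pdx hσ t x).mul (hasDerivAt_pdx hu t x)).deriv
    rw [e1, e2, e3] at he
    linear_combination he - (u t x ^ 2 / 2 + affc kp km (c t x) * θ t x) * hmassy x
      - u t x * hmomy x - ρ t x * (kp - km) * θ t x * htrans t ht x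
  -- expansions of the partial derivatives of σ
  have hSt_hd : HasDerivAt (fun s => sigm μp μm γp γm c ρ θ u s x)
      (((μp - μm) * pdt c t x) * pdx u t x + affc μp μm (c t x) * vt t x
        - ((((γp - γm) * pdt c t x) * ρ t x + (affc γp γm (c t x) - 1) * pdt ρ t x) * θ t x
          + (affc γp γm (c t x) - 1) * ρ t x * pdt θ t x)) t := by
    have h := ((hasDerivAt_affc (hasDerivAt_pdt hc t x) μp μm).mul hvt_tx).sub
      ((((hasDerivAt_affc (hasDerivAt_pdt hc t x) γp γm).sub_const 1).mul
        (hasDerivAt_pdt hρ t x)).mul (hasDerivAt_pdt hθ t x))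
    exact h
  have hSt_fa : pdt (sigm μp μm γp γm c ρ θ u) t x
      = (μp - μm) * pdt c t x * pdx u t x + affc μp μm (c t x) * vt t x
        - ((γp - γm) * pdt c t x * ρ t x * θ t x
          + (affc γp γm (c t x) - 1) * (pdt ρ t x * θ t x + ρ t x * pdt θ t x)) := by
    show deriv (fun s => sigm μp μm γp γm c ρ θ u s x) t = _
    rw [hSt_hd.deriv]
    ring
  have hSx_hd : HasDerivAt (fun y => sigm μp μm γp γm c ρ θ u t y)
      (((μp - μm) * pdx c t x) * pdx u t x + affc μp μm (c t x) * deriv (deriv (u t)) x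
        - ((((γp - γm) * pdx c t x) * ρ t x + (affc γp γm (c t x) - 1) * pdx ρ t x) * θ t x
          + (affc γp γm (c t x) - 1) * ρ t x * pdx θ t x)) x := by
    have h := ((hasDerivAt_affc (hasDerivAt_pdx hc t x) μp μm).mul hvxx).sub
      ((((hasDerivAt_affc (hasDerivAt_pdx hc t x) γp γm).sub_const 1).mul
        (hasDerivAt_pdx hρ t x)).mul (hasDerivAt_pdx hθ t x))
    exact h
  have hSx_fa : pdx (sigm μp μm γp γm c ρ θ u) t x
      = (μp - μm) * pdx c t x * pdx u t x
          + affc μp μm (c t x) * deriv (deriv (u t)) x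
        - ((γp - γm) * pdx c t x * ρ t x * θ t x
          + (affc γp γm (c t x) - 1) * (pdx ρ t x * θ t x + ρ t x * pdx θ t x)) := by
    show deriv (fun y => sigm μp μm γp γm c ρ θ u t y) x = _
    rw [hSx_hd.deriv]
    ring
  -- chain rules for the β terms
  have hβ' : HasDerivAt β (deriv β (sigm μp μm γp γm c ρ θ u t x))
      (sigm μp μm γp γm c ρ θ u t x) :=
    (hβ.differentiable one_ne_zero (sigm μp μm γp γm c ρ θ u t x)).hasDerivAt
  have hβt : HasDerivAt (fun s => β (sigm μp μm γp γm c ρ θ u s x))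
      (deriv β (sigm μp μm γp γm c ρ θ u t x) * pdt (sigm μp μm γp γm c ρ θ u) t x) t :=
    HasDerivAt.comp t hβ' (hasDerivAt_pdt hσ t x)
  have hβx : HasDerivAt (fun z => β (sigm μp μm γp γm c ρ θ u t z))
      (deriv β (sigm μp μm γp γm c ρ θ u t x) * pdx (sigm μp μm γp γm c ρ θ u) t x) x :=
    HasDerivAt.comp x hβ' (hasDerivAt_pdx hσ t x)
  have eA : pdt (fun s y => β (sigm μp μm γp γm c ρ θ u s y) / affc μp μm (c s y)) t x
      = (deriv β (sigm μp μm γp γm c ρ θ u t x) * pdt (sigm μp μm γp γm c ρ θ u) t x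
            * affc μp μm (c t x)
          - β (sigm μp μm γp γm c ρ θ u t x) * ((μp - μm) * pdt c t x))
        / affc μp μm (c t x) ^ 2 :=
    (hβt.div (hasDerivAt_affc (hasDerivAt_pdt hc t x) μp μm) hmne).deriv
  have eB : pdx (fun s y =>
        u s y * β (sigm μp μm γp γm c ρ θ u s y) / affc μp μm (c s y)) t x
      = ((pdx u t x * β (sigm μp μm γp γm c ρ θ u t x)
            + u t x * (deriv β (sigm μp μm γp γm c ρ θ u t x)
              * pdx (sigm μp μm γp γm c ρ θ u) t x)) * affc μp μm (c t x)
          - u t x * β (sigm μp μm γp γm c ρ θ u t x) * ((μp - μm) * pdx c t x))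
        / affc μp μm (c t x) ^ 2 :=
    (((hasDerivAt_pdx hu t x).mul hβx).div
      (hasDerivAt_affc (hasDerivAt_pdx hc t x) μp μm) hmne).deriv
  rw [eA, eB, eJ]
  exact final_algebra μp μm γp γm
    (β (sigm μp μm γp γm c ρ θ u t x)) (deriv β (sigm μp μm γp γm c ρ θ u t x))
    (pdx u t x) (u t x) (affc μp μm (c t x)) (affc kp km (c t x)) (affc γp γm (c t x))
    (ρ t x) (θ t x) (sigm μp μm γp γm c ρ θ u t x)
    (pdx c t x) (pdx ρ t x) (pdx θ t x) (pdt θ t x) (vt t x) (deriv (deriv (u t)) x)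
    (pdt c t x) (pdt ρ t x)
    (pdt (sigm μp μm γp γm c ρ θ u) t x) (pdx (sigm μp μm γp γm c ρ θ u) t x)
    hmne hkne hRne (htrans t ht x) (hmassy x) hengfinal rfl hSt_fa hSx_fa
end
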